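/- Let K₁ and K₂ be finite abelian groups. Then the Schur multiplier of K₁ × K₂ satisfies M(K₁ × K₂) ≅ M(K₁) × M(K₂) × Hom(K₁, K₂), where M(K) denotes the second cohomology group H²(K, ℂˣ) with K acting trivially on ℂˣ. -/

import Mathlib

set_option synthInstance.maxHeartbeats 1000000
set_option maxHeartbeats 1000000
open CategoryTheory groupCohomology
noncomputable section
abbrev TA (G : Type) [Group G] : Rep ℤ G := Rep.trivial ℤ G (Additive ℂˣ)

def isoAddEquiv {X Y : ModuleCat ℤ} (e : X ≅ Y) : X ≃+ Y where
  toFun := e.hom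
  invFun := e.inv
  left_inv x := e.hom_inv_id_apply x
  right_inv x := e.inv_hom_id_apply x
  map_add' := map_add _

lemma Rep.trivial_def {k G V : Type} [CommRing k] [Monoid G] [AddCommGroup V] [Module k V]
    : (∀ g : G, (Rep.trivial k G V).ρ g = LinearMap.id) ∧
      (∀ (g : G) (v : V), (Rep.trivial k G V).ρ g v = v) ∧
      (∀ (g : G) (v : V), Representation.trivial k G V g v = v) :=
  ⟨fun _ => rfl, fun _ _ => rfl, fun _ _ => rfl⟩

abbrev twoCocycles {G : Type} [Group G] (A : Rep ℤ G) := cocycles₂ A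

abbrev twoCoboundaries {G : Type} [Group G] (A : Rep ℤ G) : Submodule ℤ (twoCocycles A) :=
  AddSubgroup.toIntSubmodule (H2π A).hom.toAddMonoidHom.ker

abbrev H2Q {G : Type} [Group G] (A : Rep ℤ G) := twoCocycles A ⧸ twoCoboundaries A

abbrev H2_π {G : Type} [Group G] (A : Rep ℤ G) : twoCocycles A →ₗ[ℤ] H2Q A :=
  (twoCoboundaries A).mkQ

lemma mem_twoCocycles_iff {G : Type} [Group G] {A : Rep ℤ G} (f : G × G → A) :
    f ∈ cocycles₂ A ↔ ∀ g h j : G,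
      f (g * h, j) + f (g, h) = A.ρ g (f (h, j)) + f (g, h * j) :=
  mem_cocycles₂_iff f

lemma twoCocycles_map_one_fst {G : Type} [Group G] {A : Rep ℤ G} (f : cocycles₂ A) (g : G) :
    f (1, g) = f (1, 1) := cocycles₂_map_one_fst f g

lemma twoCocycles_map_one_snd {G : Type} [Group G] {A : Rep ℤ G} (f : cocycles₂ A) (g : G) :
    f (g, 1) = A.ρ g (f (1, 1)) := cocycles₂_map_one_snd f g

lemma mem_twoCoboundaries_iff {G : Type} [Group G] {A : Rep ℤ G} (f : twoCocycles A) :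
    f ∈ twoCoboundaries A ↔ ∃ x : G → A, ∀ g h : G, A.ρ g (x h) - x (g * h) + x g = f (g, h) := by
  change H2π A f = 0 ↔ _
  refine (H2π_eq_zero_iff f).trans ?_
  constructor
  · rintro ⟨x, hx⟩
    exact ⟨x, fun g h => congrFun hx (g, h)⟩
  · rintro ⟨x, hx⟩
    exact ⟨x, funext fun p => hx p.1 p.2⟩

def isoH2Q {G : Type} [Group G] (A : Rep ℤ G) : groupCohomology A 2 ≃+ H2Q A :=
  (QuotientAddGroup.quotientKerEquivOfSurjective (H2π A).hom.toAddMonoidHom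
    ((ModuleCat.epi_iff_surjective (H2π A)).1 inferInstance)).symm

lemma cocycle_id {G : Type} [Group G] (f : twoCocycles (TA G)) (g h j : G) :
    f (g * h, j) + f (g, h) = f (h, j) + f (g, h * j) := by
  have := (mem_twoCocycles_iff (A := TA G) f.1).1 f.2 g h j
  simpa [Rep.trivial_def] using this

lemma cocycle_solve {G : Type} [Group G] (f : twoCocycles (TA G)) (g h j : G) :
    f (g, h * j) = f (g * h, j) + f (g, h) - f (h, j) := by
  have := cocycle_id f g h j
  rw [eq_sub_iff_add_eq, add_comm]
  exact this.symm

/-- ω(g, h*j) = ω(g,h) + ω(g,j) where ω(g,h) = f(g,h) - f(h,g), for abelian G. -/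
lemma omega_add {G : Type} [CommGroup G] (f : twoCocycles (TA G)) (g h j : G) :
    f (g, h * j) - f (h * j, g) =
      (f (g, h) - f (h, g)) + (f (g, j) - f (j, g)) := by
  have E1 := cocycle_solve f g h j
  have E2 := cocycle_solve f h j g
  have E3 := cocycle_solve f h g j
  rw [mul_comm h g] at E3
  rw [mul_comm j g] at E2
  have E2' : f (h * j, g) = f (h, g * j) + f (j, g) - f (h, j) := by rw [E2]; abel
  rw [E1, E2', E3]
  abel

lemma omega_one_left {G : Type} [Group G] (f : twoCocycles (TA G)) (g : G) :
    f (g, (1:G)) - f ((1:G), g) = 0 := by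
  rw [twoCocycles_map_one_fst f g, twoCocycles_map_one_snd f g]
  simp [Rep.trivial_def]

lemma neg_helper {M : Type*} [AddCommGroup M] {x y a b c d : M}
    (h : y - x = (b - a) + (d - c)) : x - y = (a - b) + (c - d) := by
  rw [← neg_sub y x, h]; abel

variable {K₁ K₂ : Type} [CommGroup K₁] [CommGroup K₂]

/-- The commutator pairing of a 2-cocycle, as an element of `ℂˣ`. -/
def pairFun (f : twoCocycles (TA (K₁ × K₂))) (a : K₁) (b : K₂) : ℂˣ :=
  Additive.toMul (α := ℂˣ)
    (f ((a, (1:K₂)), ((1:K₁), b)) - f (((1:K₁), b), (a, (1:K₂))))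

lemma pairFun_one_right (f : twoCocycles (TA (K₁ × K₂))) (a : K₁) :
    pairFun f a 1 = 1 := by
  unfold pairFun
  rw [show ((1:K₁), (1:K₂)) = (1 : K₁ × K₂) from rfl,
    twoCocycles_map_one_fst f (a, (1:K₂)), twoCocycles_map_one_snd f (a, (1:K₂))]
  simp [Rep.trivial_def]

lemma pairFun_one_left (f : twoCocycles (TA (K₁ × K₂))) (b : K₂) :
    pairFun f 1 b = 1 := by
  unfold pairFun
  rw [show ((1:K₁), (1:K₂)) = (1 : K₁ × K₂) from rfl,
    twoCocycles_map_one_fst f ((1:K₁), b), twoCocycles_map_one_snd f ((1:K₁), b)]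
  simp [Rep.trivial_def]

lemma pairFun_mul_right (f : twoCocycles (TA (K₁ × K₂))) (a : K₁) (b b' : K₂) :
    pairFun f a (b * b') = pairFun f a b * pairFun f a b' := by
  unfold pairFun
  have h := omega_add f (a, (1:K₂)) ((1:K₁), b) ((1:K₁), b')
  simp only [Prod.mk_mul_mk, mul_one, one_mul] at h
  rw [h]
  rfl

lemma pairFun_mul_left (f : twoCocycles (TA (K₁ × K₂))) (a a' : K₁) (b : K₂) :
    pairFun f (a * a') b = pairFun f a b * pairFun f a' b := by
  unfold pairFun
  have h := omega_add f ((1:K₁), b) (a, (1:K₂)) (a', (1:K₂))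
  simp only [Prod.mk_mul_mk, mul_one, one_mul] at h
  rw [neg_helper h]
  rfl

/-- The pairing of a 2-cocycle as a monoid hom pairing. -/
def pairHom (f : twoCocycles (TA (K₁ × K₂))) : K₁ →* (K₂ →* ℂˣ) where
  toFun a :=
    { toFun := fun b => pairFun f a b
      map_one' := pairFun_one_right f a
      map_mul' := pairFun_mul_right f a }
  map_one' := MonoidHom.ext fun b => pairFun_one_left f b
  map_mul' a a' := MonoidHom.ext fun b => pairFun_mul_left f a a' b

def pair : twoCocycles (TA (K₁ × K₂)) →+ Additive (K₁ →* (K₂ →* ℂˣ)) where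
  toFun f := Additive.ofMul (pairHom f)
  map_zero' :=
    congrArg Additive.ofMul (MonoidHom.ext fun a => MonoidHom.ext fun b =>
      show Additive.toMul (α := ℂˣ)
          ((0 : (K₁ × K₂) × (K₁ × K₂) → Additive ℂˣ) ((a, 1), (1, b))
            - (0 : (K₁ × K₂) × (K₁ × K₂) → Additive ℂˣ) ((1, b), (a, 1)))
          = Additive.toMul (0 : Additive ℂˣ) from
        congrArg Additive.toMul (by simp))
  map_add' f g :=
    congrArg Additive.ofMul (MonoidHom.ext fun a => MonoidHom.ext fun b =>
      show Additive.toMul (α := ℂˣ)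
          ((f.1 + g.1) ((a, 1), (1, b)) - (f.1 + g.1) ((1, b), (a, 1)))
          = Additive.toMul ((f.1 ((a, 1), (1, b)) - f.1 ((1, b), (a, 1)))
              + (g.1 ((a, 1), (1, b)) - g.1 ((1, b), (a, 1)))) from
        congrArg Additive.toMul (by simp only [Pi.add_apply]; abel))

/-- The 2-cocycle attached to a bilinear pairing. -/
def pairCocycle : Additive (K₁ →* (K₂ →* ℂˣ)) →+ twoCocycles (TA (K₁ × K₂)) where
  toFun β := ⟨fun p => -(Additive.ofMul (α := ℂˣ) ((Additive.toMul β) p.2.1 p.1.2)), by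
    rw [mem_twoCocycles_iff]
    intro g h j
    simp only [Prod.fst_mul, Prod.snd_mul, map_mul, MonoidHom.mul_apply, ofMul_mul,
      Rep.trivial_def]
    abel⟩
  map_zero' := Subtype.ext <| funext fun p => by
    simp only [toMul_zero, MonoidHom.one_apply, ofMul_one, neg_zero]
    rfl
  map_add' β γ := Subtype.ext <| funext fun p => by
    show -(Additive.ofMul (α := ℂˣ) ((Additive.toMul (β + γ)) p.2.1 p.1.2)) = _
    rw [toMul_add]
    simp only [MonoidHom.mul_apply, ofMul_mul]
    show _ = (-(Additive.ofMul (α := ℂˣ) ((Additive.toMul β) p.2.1 p.1.2)))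
      + (-(Additive.ofMul (α := ℂˣ) ((Additive.toMul γ) p.2.1 p.1.2)))
    abel

-- merge in res/infl maps from t3
def resL : twoCocycles (TA (K₁ × K₂)) →+ twoCocycles (TA K₁) where
  toFun f := ⟨fun p => f ((p.1, (1:K₂)), (p.2, (1:K₂))), by
    rw [mem_twoCocycles_iff]
    intro g h j
    have := cocycle_id f (g, (1:K₂)) (h, 1) (j, 1)
    simpa [Rep.trivial_def, Prod.mk_mul_mk] using this⟩
  map_zero' := rfl
  map_add' f g := rfl

def resR : twoCocycles (TA (K₁ × K₂)) →+ twoCocycles (TA K₂) where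
  toFun f := ⟨fun p => f (((1:K₁), p.1), ((1:K₁), p.2)), by
    rw [mem_twoCocycles_iff]
    intro g h j
    have := cocycle_id f ((1:K₁), g) (1, h) (1, j)
    simpa [Rep.trivial_def, Prod.mk_mul_mk] using this⟩
  map_zero' := rfl
  map_add' f g := rfl

def inflL : twoCocycles (TA K₁) →+ twoCocycles (TA (K₁ × K₂)) where
  toFun f := ⟨fun p => f (p.1.1, p.2.1), by
    rw [mem_twoCocycles_iff]
    intro g h j
    have := cocycle_id f g.1 h.1 j.1
    simpa [Rep.trivial_def] using this⟩
  map_zero' := rfl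
  map_add' f g := rfl

def inflR : twoCocycles (TA K₂) →+ twoCocycles (TA (K₁ × K₂)) where
  toFun f := ⟨fun p => f (p.1.2, p.2.2), by
    rw [mem_twoCocycles_iff]
    intro g h j
    have := cocycle_id f g.2 h.2 j.2
    simpa [Rep.trivial_def] using this⟩
  map_zero' := rfl
  map_add' f g := rfl

lemma resL_coboundary {f : twoCocycles (TA (K₁ × K₂))}
    (hf : f ∈ twoCoboundaries (TA (K₁ × K₂))) :
    resL f ∈ twoCoboundaries (TA K₁) := by
  rw [mem_twoCoboundaries_iff] at hf ⊢
  obtain ⟨x, hx⟩ := hf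
  refine ⟨fun a => x (a, (1:K₂)), fun g h => ?_⟩
  have := hx (g, (1:K₂)) (h, (1:K₂))
  show _ = f ((g, (1:K₂)), (h, (1:K₂)))
  simpa [Rep.trivial_def, Prod.mk_mul_mk] using this

lemma resR_coboundary {f : twoCocycles (TA (K₁ × K₂))}
    (hf : f ∈ twoCoboundaries (TA (K₁ × K₂))) :
    resR f ∈ twoCoboundaries (TA K₂) := by
  rw [mem_twoCoboundaries_iff] at hf ⊢
  obtain ⟨x, hx⟩ := hf
  refine ⟨fun b => x ((1:K₁), b), fun g h => ?_⟩
  have := hx ((1:K₁), g) ((1:K₁), h)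
  show _ = f (((1:K₁), g), ((1:K₁), h))
  simpa [Rep.trivial_def, Prod.mk_mul_mk] using this

lemma inflL_coboundary {f : twoCocycles (TA K₁)}
    (hf : f ∈ twoCoboundaries (TA K₁)) :
    inflL (K₂ := K₂) f ∈ twoCoboundaries (TA (K₁ × K₂)) := by
  rw [mem_twoCoboundaries_iff] at hf ⊢
  obtain ⟨x, hx⟩ := hf
  refine ⟨fun g => x g.1, fun g h => ?_⟩
  have := hx g.1 h.1
  show _ = f (g.1, h.1)
  simpa [Rep.trivial_def] using this

lemma inflR_coboundary {f : twoCocycles (TA K₂)}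
    (hf : f ∈ twoCoboundaries (TA K₂)) :
    inflR (K₁ := K₁) f ∈ twoCoboundaries (TA (K₁ × K₂)) := by
  rw [mem_twoCoboundaries_iff] at hf ⊢
  obtain ⟨x, hx⟩ := hf
  refine ⟨fun g => x g.2, fun g h => ?_⟩
  have := hx g.2 h.2
  show _ = f (g.2, h.2)
  simpa [Rep.trivial_def] using this

lemma pair_coboundary {f : twoCocycles (TA (K₁ × K₂))}
    (hf : f ∈ twoCoboundaries (TA (K₁ × K₂))) :
    pair f = 0 := by
  rw [mem_twoCoboundaries_iff] at hf
  obtain ⟨x, hx⟩ := hf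
  apply congrArg Additive.ofMul (MonoidHom.ext fun a => MonoidHom.ext fun b => ?_)
  have h1 := hx (a, (1:K₂)) ((1:K₁), b)
  have h2 := hx ((1:K₁), b) (a, (1:K₂))
  simp only [Rep.trivial_def, Prod.mk_mul_mk, mul_one, one_mul] at h1 h2
  show pairFun f a b = 1
  unfold pairFun
  rw [← h1, ← h2]
  rw [show ((x ((1:K₁), b) - x (a, b) + x (a, (1:K₂)))
      - (x (a, (1:K₂)) - x (a, b) + x ((1:K₁), b)) : Additive ℂˣ) = 0 by abel]
  rfl

lemma const_coboundary {K : Type} [Group K] (f : twoCocycles (TA K))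
    (h : ∀ p, f p = f ((1:K), (1:K))) : f ∈ twoCoboundaries (TA K) := by
  rw [mem_twoCoboundaries_iff]
  refine ⟨fun _ => f ((1:K), (1:K)), fun g h' => ?_⟩
  rw [h (g, h')]
  simp [Rep.trivial_def]

lemma solve_left {M : Type*} [AddCommGroup M] {p q r s : M} (h : p + q = r + s) :
    p = r + s - q := by rw [← h]; abel

lemma solve_right {M : Type*} [AddCommGroup M] {p q r s : M} (h : p + q = r + s) :
    s = p + q - r := by rw [h]; abel

lemma master (f : twoCocycles (TA (K₁ × K₂))) :
    inflL (resL f) + inflR (resR f) + pairCocycle (pair f) - f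
      ∈ twoCoboundaries (TA (K₁ × K₂)) := by
  rw [mem_twoCoboundaries_iff]
  refine ⟨fun g => f ((g.1, (1:K₂)), ((1:K₁), g.2)), fun g h => ?_⟩
  obtain ⟨a, b⟩ := g
  obtain ⟨a', b'⟩ := h
  show f ((a', (1:K₂)), ((1:K₁), b')) - f ((a * a', (1:K₂)), ((1:K₁), b * b'))
        + f ((a, (1:K₂)), ((1:K₁), b))
      = f ((a, (1:K₂)), (a', (1:K₂))) + f (((1:K₁), b), ((1:K₁), b'))
        + (-(f ((a', (1:K₂)), ((1:K₁), b)) - f (((1:K₁), b), (a', (1:K₂)))))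
        - f ((a, b), (a', b'))
  have C1 := cocycle_id f (a, (1:K₂)) ((1:K₁), b) (a', b')
  have C2 := cocycle_id f (a, (1:K₂)) (a', (1:K₂)) ((1:K₁), b * b')
  have C3 := cocycle_id f ((1:K₁), b) (a', (1:K₂)) ((1:K₁), b')
  have C4 := cocycle_id f (a', (1:K₂)) ((1:K₁), b) ((1:K₁), b')
  simp only [Prod.mk_mul_mk, mul_one, one_mul] at C1 C2 C3 C4
  -- C1 : f ((a,b),(a',b')) + f ((a,1),(1,b)) = f ((1,b),(a',b')) + f ((a,1),(a',b*b'))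
  -- C3 : f ((a',b),(1,b')) + f ((1,b),(a',1)) = f ((a',1),(1,b')) + f ((1,b),(a',b'))
  -- C4 : f ((a',b),(1,b')) + f ((a',1),(1,b)) = f ((1,b),(1,b')) + f ((a',1),(1,b*b'))
  -- C2 : f ((a*a',1),(1,b*b')) + f ((a,1),(a',1)) = f ((a',1),(1,b*b')) + f ((a,1),(a',b*b'))
  have S1 := solve_left C1
  have S3 := solve_right C3
  have S4 := solve_left C4
  have S2 := solve_right C2
  rw [S1, S3, S4, S2]
  abel

variable (K₁ K₂)

def Φfull : twoCocycles (TA (K₁ × K₂)) →+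
    H2Q (TA K₁) × H2Q (TA K₂) × Additive (K₁ →* (K₂ →* ℂˣ)) :=
  ((H2_π (TA K₁)).toAddMonoidHom.comp resL).prod
    (((H2_π (TA K₂)).toAddMonoidHom.comp resR).prod pair)

lemma Φfull_coboundary {f : twoCocycles (TA (K₁ × K₂))}
    (hf : f ∈ twoCoboundaries (TA (K₁ × K₂))) : Φfull K₁ K₂ f = 0 := by
  unfold Φfull
  refine Prod.ext ?_ (Prod.ext ?_ ?_)
  · exact (Submodule.Quotient.mk_eq_zero _).2 (resL_coboundary hf)
  · exact (Submodule.Quotient.mk_eq_zero _).2 (resR_coboundary hf)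
  · exact pair_coboundary hf

def Φbar : H2Q (TA (K₁ × K₂)) →ₗ[ℤ]
    H2Q (TA K₁) × H2Q (TA K₂) × Additive (K₁ →* (K₂ →* ℂˣ)) :=
  Submodule.liftQ _ (Φfull K₁ K₂).toIntLinearMap
    (fun f hf => Φfull_coboundary K₁ K₂ hf)

def ΨL : H2Q (TA K₁) →ₗ[ℤ] H2Q (TA (K₁ × K₂)) :=
  Submodule.liftQ _ ((H2_π (TA (K₁ × K₂))).toAddMonoidHom.comp inflL).toIntLinearMap
    (fun f hf => (Submodule.Quotient.mk_eq_zero _).2 (inflL_coboundary hf))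

def ΨR : H2Q (TA K₂) →ₗ[ℤ] H2Q (TA (K₁ × K₂)) :=
  Submodule.liftQ _ ((H2_π (TA (K₁ × K₂))).toAddMonoidHom.comp inflR).toIntLinearMap
    (fun f hf => (Submodule.Quotient.mk_eq_zero _).2 (inflR_coboundary hf))

def Ψβ : Additive (K₁ →* (K₂ →* ℂˣ)) →+ H2Q (TA (K₁ × K₂)) :=
  (H2_π (TA (K₁ × K₂))).toAddMonoidHom.comp pairCocycle

variable {K₁ K₂}

lemma resL_inflL (f : twoCocycles (TA K₁)) : resL (inflL (K₂ := K₂) f) = f := rfl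

lemma resR_inflR (f : twoCocycles (TA K₂)) : resR (inflR (K₁ := K₁) f) = f := rfl

lemma resR_inflL_cob (f : twoCocycles (TA K₁)) :
    resR (inflL (K₂ := K₂) f) ∈ twoCoboundaries (TA K₂) :=
  const_coboundary _ (fun _ => rfl)

lemma resL_inflR_cob (f : twoCocycles (TA K₂)) :
    resL (inflR (K₁ := K₁) f) ∈ twoCoboundaries (TA K₁) :=
  const_coboundary _ (fun _ => rfl)

lemma pair_inflL (f : twoCocycles (TA K₁)) : pair (inflL (K₂ := K₂) f) = 0 := by
  apply congrArg Additive.ofMul (MonoidHom.ext fun a => MonoidHom.ext fun b => ?_)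
  show pairFun (inflL f) a b = 1
  unfold pairFun
  show Additive.toMul (α := ℂˣ) (f (a, (1:K₁)) - f ((1:K₁), a)) = 1
  rw [twoCocycles_map_one_fst f a, twoCocycles_map_one_snd f a]
  simp [Rep.trivial_def]

lemma pair_inflR (f : twoCocycles (TA K₂)) : pair (inflR (K₁ := K₁) f) = 0 := by
  apply congrArg Additive.ofMul (MonoidHom.ext fun a => MonoidHom.ext fun b => ?_)
  show pairFun (inflR f) a b = 1
  unfold pairFun
  show Additive.toMul (α := ℂˣ) (f ((1:K₂), b) - f (b, (1:K₂))) = 1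
  rw [twoCocycles_map_one_fst f b, twoCocycles_map_one_snd f b]
  simp [Rep.trivial_def]

lemma resL_pairCocycle (β : Additive (K₁ →* (K₂ →* ℂˣ))) :
    resL (pairCocycle β) = 0 := by
  apply Subtype.ext
  funext p
  show -(Additive.ofMul (α := ℂˣ) ((Additive.toMul β) p.2 (1:K₂))) = _
  simp only [map_one, ofMul_one, neg_zero]
  rfl

lemma resR_pairCocycle (β : Additive (K₁ →* (K₂ →* ℂˣ))) :
    resR (pairCocycle β) = 0 := by
  apply Subtype.ext
  funext p
  show -(Additive.ofMul (α := ℂˣ) ((Additive.toMul β) (1:K₁) p.1)) = _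
  simp only [map_one, MonoidHom.one_apply, ofMul_one, neg_zero]
  rfl

lemma pair_pairCocycle (β : Additive (K₁ →* (K₂ →* ℂˣ))) :
    pair (pairCocycle β) = β := by
  apply Additive.toMul.injective
  apply MonoidHom.ext fun a => MonoidHom.ext fun b => ?_
  show pairFun (pairCocycle β) a b = (Additive.toMul β) a b
  unfold pairFun
  show Additive.toMul (α := ℂˣ)
      (-(Additive.ofMul (α := ℂˣ) ((Additive.toMul β) (1:K₁) (1:K₂)))
        - (-(Additive.ofMul (α := ℂˣ) ((Additive.toMul β) a b)))) = (Additive.toMul β) a b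
  simp

variable (K₁ K₂)

def mainEquiv : H2Q (TA (K₁ × K₂)) ≃+
    H2Q (TA K₁) × H2Q (TA K₂) × Additive (K₁ →* (K₂ →* ℂˣ)) where
  toFun := Φbar K₁ K₂
  invFun := fun m => ΨL K₁ K₂ m.1 + ΨR K₁ K₂ m.2.1 + Ψβ K₁ K₂ m.2.2
  left_inv := by
    intro y
    obtain ⟨f, rfl⟩ := Submodule.Quotient.mk_surjective _ y
    show ΨL K₁ K₂ (Submodule.Quotient.mk (resL f)) + ΨR K₁ K₂ (Submodule.Quotient.mk (resR f))
        + Ψβ K₁ K₂ (pair f) = Submodule.Quotient.mk f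
    show Submodule.Quotient.mk (inflL (resL f)) + Submodule.Quotient.mk (inflR (resR f))
        + Submodule.Quotient.mk (pairCocycle (pair f)) = Submodule.Quotient.mk f
    rw [← Submodule.Quotient.mk_add, ← Submodule.Quotient.mk_add, Submodule.Quotient.eq]
    exact master f
  right_inv := by
    rintro ⟨y₁, y₂, β⟩
    obtain ⟨f₁, rfl⟩ := Submodule.Quotient.mk_surjective _ y₁
    obtain ⟨f₂, rfl⟩ := Submodule.Quotient.mk_surjective _ y₂
    have e₁ : Φbar K₁ K₂ (ΨL K₁ K₂ (Submodule.Quotient.mk f₁))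
        = (Submodule.Quotient.mk f₁, 0, 0) := by
      show Φfull K₁ K₂ (inflL f₁) = _
      refine Prod.ext ?_ (Prod.ext ?_ ?_)
      · show Submodule.Quotient.mk (resL (inflL f₁)) = Submodule.Quotient.mk f₁
        rw [resL_inflL]
      · show Submodule.Quotient.mk (resR (inflL f₁)) = 0
        exact (Submodule.Quotient.mk_eq_zero _).2 (resR_inflL_cob f₁)
      · exact pair_inflL f₁
    have e₂ : Φbar K₁ K₂ (ΨR K₁ K₂ (Submodule.Quotient.mk f₂))
        = (0, Submodule.Quotient.mk f₂, 0) := by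
      show Φfull K₁ K₂ (inflR f₂) = _
      refine Prod.ext ?_ (Prod.ext ?_ ?_)
      · show Submodule.Quotient.mk (resL (inflR f₂)) = 0
        exact (Submodule.Quotient.mk_eq_zero _).2 (resL_inflR_cob f₂)
      · show Submodule.Quotient.mk (resR (inflR f₂)) = Submodule.Quotient.mk f₂
        rw [resR_inflR]
      · exact pair_inflR f₂
    have e₃ : Φbar K₁ K₂ (Ψβ K₁ K₂ β) = (0, 0, β) := by
      show Φfull K₁ K₂ (pairCocycle β) = _
      refine Prod.ext ?_ (Prod.ext ?_ ?_)
      · show Submodule.Quotient.mk (resL (pairCocycle β)) = 0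
        rw [resL_pairCocycle]
        exact (Submodule.Quotient.mk_eq_zero _).2 (Submodule.zero_mem _)
      · show Submodule.Quotient.mk (resR (pairCocycle β)) = 0
        rw [resR_pairCocycle]
        exact (Submodule.Quotient.mk_eq_zero _).2 (Submodule.zero_mem _)
      · exact pair_pairCocycle β
    rw [map_add, map_add, e₁, e₂, e₃]
    simp only [Prod.mk_add_mk, add_zero, zero_add]
  map_add' := map_add _

end

/-- The Schur multiplier `M(K) = H²(K, ℂˣ)` of a group `K`: the second group cohomology
of `K` with coefficients in the trivial `K`-module `ℂˣ` (viewed additively as a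
`ℤ`-module). -/
abbrev SchurMultiplier (K : Type) [Group K] : Type :=
  groupCohomology (Rep.trivial ℤ K (Additive ℂˣ)) 2

theorem schurMultiplier_prod (K₁ K₂ : Type) [CommGroup K₁] [CommGroup K₂]
    [Finite K₁] [Finite K₂] :
    Nonempty (SchurMultiplier (K₁ × K₂) ≃+
      SchurMultiplier K₁ × SchurMultiplier K₂ × Additive (K₁ →* K₂)) := by
  haveI : NeZero ((Monoid.exponent K₂ : ℂ)) :=
    ⟨Nat.cast_ne_zero.2 Monoid.exponent_ne_zero_of_finite⟩
  obtain ⟨d⟩ := CommGroup.monoidHom_mulEquiv_of_hasEnoughRootsOfUnity K₂ ℂ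
  let mc : (K₁ →* (K₂ →* ℂˣ)) ≃* (K₁ →* K₂) :=
    MulEquiv.monoidHomCongrRight d
  let eP : Additive (K₁ →* (K₂ →* ℂˣ)) ≃+ Additive (K₁ →* K₂) := MulEquiv.toAdditive mc
  let eG := isoH2Q (TA (K₁ × K₂))
  let e1 := isoH2Q (TA K₁)
  let e2 := isoH2Q (TA K₂)
  exact ⟨eG.trans ((mainEquiv K₁ K₂).trans
    ((e1.symm.prodCongr (e2.symm.prodCongr eP))))⟩
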